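/- A G-graded commutative ring R is a Gelfand graded ring if and only if its identity component R_e is a Gelfand commutative ring. -/

import Mathlib

section GradedGelfand

variable {G : Type*} [AddGroup G] [DecidableEq G] {R : Type*} [CommRing R]
variable (𝒜 : G → AddSubgroup R) [GradedRing 𝒜]

/-- A homogeneous (graded) prime ideal: a proper graded ideal that is prime
with respect to homogeneous elements. -/
def IsGradedPrime (P : Ideal R) : Prop :=
  P.IsHomogeneous 𝒜 ∧ P ≠ ⊤ ∧
    ∀ a b : R, SetLike.IsHomogeneousElem 𝒜 a → SetLike.IsHomogeneousElem 𝒜 b →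
      a * b ∈ P → a ∈ P ∨ b ∈ P

/-- A graded maximal ideal: a proper graded ideal maximal among proper graded ideals. -/
def IsGradedMaximal (M : Ideal R) : Prop :=
  M.IsHomogeneous 𝒜 ∧ M ≠ ⊤ ∧
    ∀ J : Ideal R, J.IsHomogeneous 𝒜 → M ≤ J → J ≠ ⊤ → J = M

/-- The homogeneous prime spectrum of a graded ring. -/
def GSpec := { P : Ideal R // IsGradedPrime 𝒜 P }

/-- The Zariski topology on the homogeneous prime spectrum, generated by the basic
open sets `D_G(r)` for homogeneous `r`; the closed sets are exactly the `V_G(I)`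
for graded ideals `I`. -/
instance : TopologicalSpace (GSpec 𝒜) :=
  TopologicalSpace.generateFrom
    { U | ∃ r : R, SetLike.IsHomogeneousElem 𝒜 r ∧ U = { P : GSpec 𝒜 | r ∉ P.1 } }

/-- The set of graded maximal ideals inside the homogeneous prime spectrum. -/
def GMax : Set (GSpec 𝒜) := { P | IsGradedMaximal 𝒜 P.1 }

/-- A Gelfand graded ring: every homogeneous prime ideal is contained in a unique
graded maximal ideal. -/
def IsGelfandGraded : Prop :=
  ∀ P : Ideal R, IsGradedPrime 𝒜 P →
    ∃! M : Ideal R, IsGradedMaximal 𝒜 M ∧ P ≤ M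

/-- A pm⁺ graded ring: for every homogeneous prime `P`, the homogeneous primes
containing `P` form a chain. -/
def IsPMPlusGraded : Prop :=
  ∀ P Q Q' : Ideal R, IsGradedPrime 𝒜 P → IsGradedPrime 𝒜 Q → IsGradedPrime 𝒜 Q' →
    P ≤ Q → P ≤ Q' → Q ≤ Q' ∨ Q' ≤ Q

end GradedGelfand

section Statements

variable {G : Type*} [AddGroup G] [DecidableEq G] {R : Type*} [CommRing R]
variable (𝒜 : G → AddSubgroup R) [GradedRing 𝒜]

open DirectSum

/-- The degree-zero part of an ideal of `R`, as an ideal of `𝒜 0`. -/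
def gres (P : Ideal R) : Ideal ↥(𝒜 0) where
  carrier := {a | (a : R) ∈ P}
  add_mem' := fun {a b} ha hb => by
    show ((a + b : ↥(𝒜 0)) : R) ∈ P
    exact P.add_mem ha hb
  zero_mem' := by show ((0 : ↥(𝒜 0)) : R) ∈ P; simp
  smul_mem' := fun c {x} hx => by
    show ((c * x : ↥(𝒜 0)) : R) ∈ P
    show (c : R) * (x : R) ∈ P
    exact P.mul_mem_left _ hx

@[simp] lemma mem_gres {P : Ideal R} {a : ↥(𝒜 0)} : a ∈ gres 𝒜 P ↔ (a : R) ∈ P := Iff.rfl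

/-- The property defining `gsharp`. -/
def gsharpProp (p : Ideal ↥(𝒜 0)) (x : R) : Prop :=
  ∀ g h : G, ∀ y ∈ 𝒜 h, g + h = 0 → ∃ a ∈ p, (a : R) = (decompose 𝒜 x g : R) * y

lemma gsharpProp_add {p : Ideal ↥(𝒜 0)} {x x' : R} (hx : gsharpProp 𝒜 p x)
    (hx' : gsharpProp 𝒜 p x') : gsharpProp 𝒜 p (x + x') := by
  intro g h y hy hgh
  obtain ⟨a, ha, hae⟩ := hx g h y hy hgh
  obtain ⟨a', ha', hae'⟩ := hx' g h y hy hgh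
  refine ⟨a + a', p.add_mem ha ha', ?_⟩
  show (a : R) + (a' : R) = _
  rw [hae, hae', decompose_add, DirectSum.add_apply, AddSubgroup.coe_add, add_mul]

lemma gsharpProp_zero {p : Ideal ↥(𝒜 0)} : gsharpProp 𝒜 p 0 := by
  intro g h y hy hgh
  exact ⟨0, p.zero_mem, by simp⟩

lemma gsharpProp_hom_mul {p : Ideal ↥(𝒜 0)} {w x : R} {i : G} (hw : w ∈ 𝒜 i)
    (hx : gsharpProp 𝒜 p x) : gsharpProp 𝒜 p (w * x) := by
  intro g h y hy hgh
  have hdeg : (-i + g) + (h + i) = 0 := by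
    rw [← add_assoc, add_assoc (-i) g h, hgh, add_zero, neg_add_cancel]
  obtain ⟨a, ha, hae⟩ := hx (-i + g) (h + i) (y * w) (SetLike.mul_mem_graded hy hw) hdeg
  refine ⟨a, ha, ?_⟩
  have hg : g = i + (-i + g) := by rw [← add_assoc, add_neg_cancel, zero_add]
  have key : (decompose 𝒜 (w * x) g : R) = w * (decompose 𝒜 x (-i + g) : R) := by
    conv_lhs => rw [hg]
    exact coe_decompose_mul_add_of_left_mem 𝒜 hw
  rw [hae, key]
  ring

/-- For `p` an ideal of `𝒜 0`, the ideal of `R` of elements all whose homogeneous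
components `x_g` satisfy `x_g · 𝒜 (-g) ⊆ p`. -/
def gsharp (p : Ideal ↥(𝒜 0)) : Ideal R where
  carrier := {x | gsharpProp 𝒜 p x}
  add_mem' := gsharpProp_add 𝒜
  zero_mem' := gsharpProp_zero 𝒜
  smul_mem' := by
    intro r x hx
    show gsharpProp 𝒜 p (r * x)
    classical
    have hr := DirectSum.sum_support_decompose 𝒜 r
    rw [← hr, Finset.sum_mul]
    have : ∀ s : Finset G, gsharpProp 𝒜 p (∑ i ∈ s, (decompose 𝒜 r i : R) * x) := by
      intro s
      induction s using Finset.induction_on with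
      | empty => simpa using gsharpProp_zero 𝒜
      | insert _ _ hni ih =>
        rw [Finset.sum_insert hni]
        exact gsharpProp_add 𝒜 (gsharpProp_hom_mul 𝒜 (SetLike.coe_mem _) hx) ih
    exact this _

lemma mem_gsharp {p : Ideal ↥(𝒜 0)} {x : R} : x ∈ gsharp 𝒜 p ↔ gsharpProp 𝒜 p x := Iff.rfl

lemma gsharp_mono {p q : Ideal ↥(𝒜 0)} (hpq : p ≤ q) : gsharp 𝒜 p ≤ gsharp 𝒜 q := by
  intro x hx g h y hy hgh
  obtain ⟨a, ha, hae⟩ := hx g h y hy hgh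
  exact ⟨a, hpq ha, hae⟩

lemma gsharp_homogeneous (p : Ideal ↥(𝒜 0)) : (gsharp 𝒜 p).IsHomogeneous 𝒜 := by
  intro i x hx
  intro g h y hy hgh
  by_cases hgi : g = i
  · subst hgi
    rw [decompose_of_mem_same 𝒜 (SetLike.coe_mem (decompose 𝒜 x g))]
    exact hx g h y hy hgh
  · rw [decompose_of_mem_ne 𝒜 (SetLike.coe_mem (decompose 𝒜 x i)) (Ne.symm hgi)]
    exact ⟨0, p.zero_mem, by simp⟩

lemma gres_gsharp (p : Ideal ↥(𝒜 0)) : gres 𝒜 (gsharp 𝒜 p) = p := by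
  ext a
  rw [mem_gres, mem_gsharp]
  constructor
  · intro h
    obtain ⟨b, hb, hbe⟩ := h 0 0 1 (SetLike.one_mem_graded 𝒜) (add_zero 0)
    rw [decompose_of_mem_same 𝒜 a.2, mul_one] at hbe
    have : b = a := Subtype.ext hbe
    rwa [← this]
  · intro ha g h y hy hgh
    by_cases hg : g = 0
    · subst hg
      have hh : h = 0 := by rwa [zero_add] at hgh
      subst hh
      rw [decompose_of_mem_same 𝒜 a.2]
      refine ⟨⟨y, hy⟩ * a, p.mul_mem_left _ ha, ?_⟩
      show (y : R) * (a : R) = (a : R) * y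
      ring
    · rw [decompose_of_mem_ne 𝒜 a.2 (fun h0 => hg h0.symm)]
      exact ⟨0, p.zero_mem, by simp⟩

lemma le_gsharp_gres {P : Ideal R} (hP : P.IsHomogeneous 𝒜) : P ≤ gsharp 𝒜 (gres 𝒜 P) := by
  intro x hx g h y hy hgh
  have h1 : (decompose 𝒜 x g : R) ∈ P := hP g hx
  have h2 : (decompose 𝒜 x g : R) * y ∈ P := P.mul_mem_right _ h1
  have hmem : (decompose 𝒜 x g : R) * y ∈ 𝒜 0 := by
    have := SetLike.mul_mem_graded (SetLike.coe_mem (decompose 𝒜 x g)) hy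
    rwa [hgh] at this
  exact ⟨⟨_, hmem⟩, h2, rfl⟩

lemma gsharp_ne_top {p : Ideal ↥(𝒜 0)} (hp : p ≠ ⊤) : gsharp 𝒜 p ≠ ⊤ := by
  intro h
  apply hp
  rw [← gres_gsharp 𝒜 p, h]
  rw [Ideal.eq_top_iff_one, mem_gres]
  exact Submodule.mem_top

lemma gres_ne_top {P : Ideal R} (hP : P ≠ ⊤) : gres 𝒜 P ≠ ⊤ := by
  intro h
  apply hP
  rw [Ideal.eq_top_iff_one] at h ⊢
  exact h


lemma gres_isPrime {P : Ideal R} (hP : IsGradedPrime 𝒜 P) : (gres 𝒜 P).IsPrime := by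
  obtain ⟨hhom, hne, hprime⟩ := hP
  constructor
  · intro h
    apply hne
    rw [Ideal.eq_top_iff_one] at h ⊢
    rw [mem_gres] at h
    exact h
  · intro a b hab
    rw [mem_gres] at hab
    have : (a : R) * (b : R) ∈ P := hab
    rcases hprime a b ⟨0, a.2⟩ ⟨0, b.2⟩ this with h | h
    · exact Or.inl ((mem_gres 𝒜).mpr h)
    · exact Or.inr ((mem_gres 𝒜).mpr h)

lemma gsharp_isGradedPrime {p : Ideal ↥(𝒜 0)} (hp : p.IsPrime) :
    IsGradedPrime 𝒜 (gsharp 𝒜 p) := by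
  refine ⟨gsharp_homogeneous 𝒜 p, gsharp_ne_top 𝒜 hp.ne_top, ?_⟩
  rintro a b ⟨i, hai⟩ ⟨j, hbj⟩ hab
  by_contra hcon
  push_neg at hcon
  obtain ⟨ha, hb⟩ := hcon
  rw [mem_gsharp] at ha hb hab
  unfold gsharpProp at ha hb
  push_neg at ha hb
  obtain ⟨g, h, y, hy, hgh, hya⟩ := ha
  obtain ⟨g', h', v, hv, hg'h', hvb⟩ := hb
  -- g must equal i, else component is zero
  have hgi : g = i := by
    by_contra hne
    exact hya 0 p.zero_mem (by
      rw [decompose_of_mem_ne 𝒜 hai (fun e => hne e.symm)]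
      simp)
  have hg'j : g' = j := by
    by_contra hne
    exact hvb 0 p.zero_mem (by
      rw [decompose_of_mem_ne 𝒜 hbj (fun e => hne e.symm)]
      simp)
  subst hgi; subst hg'j
  rw [decompose_of_mem_same 𝒜 hai] at hya
  rw [decompose_of_mem_same 𝒜 hbj] at hvb
  -- apply hab at degree i + j with test element v * y
  have hdeg : (g + g') + (h' + h) = 0 := by
    rw [← add_assoc, add_assoc g g' h', hg'h', add_zero, hgh]
  have habmem : a * b ∈ 𝒜 (g + g') := SetLike.mul_mem_graded hai hbj
  obtain ⟨c, hc, hce⟩ := hab (g + g') (h' + h) (v * y) (SetLike.mul_mem_graded hv hy) hdeg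
  rw [decompose_of_mem_same 𝒜 habmem] at hce
  have hAmem : a * y ∈ 𝒜 0 := by
    have := SetLike.mul_mem_graded hai hy; rwa [hgh] at this
  have hBmem : b * v ∈ 𝒜 0 := by
    have := SetLike.mul_mem_graded hbj hv; rwa [hg'h'] at this
  have hABc : c = (⟨a * y, hAmem⟩ : ↥(𝒜 0)) * ⟨b * v, hBmem⟩ := by
    apply Subtype.ext
    show (c : R) = (a * y) * (b * v)
    rw [hce]; ring
  rcases hp.mem_or_mem (hABc ▸ hc) with hmem | hmem
  · exact hya _ hmem rfl
  · exact hvb _ hmem rfl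

lemma gsharp_isGradedMaximal {m : Ideal ↥(𝒜 0)} (hm : m.IsMaximal) :
    IsGradedMaximal 𝒜 (gsharp 𝒜 m) := by
  refine ⟨gsharp_homogeneous 𝒜 m, gsharp_ne_top 𝒜 hm.ne_top, ?_⟩
  intro J hJ hle hJtop
  have h1 : m ≤ gres 𝒜 J := by
    rw [← gres_gsharp 𝒜 m]
    intro a ha
    rw [mem_gres] at ha ⊢
    exact hle ha
  have h2 : gres 𝒜 J = m := (hm.eq_of_le (gres_ne_top 𝒜 hJtop) h1).symm
  refine le_antisymm ?_ hle
  calc J ≤ gsharp 𝒜 (gres 𝒜 J) := le_gsharp_gres 𝒜 hJ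
    _ = gsharp 𝒜 m := by rw [h2]

lemma gres_isMaximal {M : Ideal R} (hM : IsGradedMaximal 𝒜 M) : (gres 𝒜 M).IsMaximal := by
  obtain ⟨hhom, hne, hmax⟩ := hM
  obtain ⟨m, hm, hlem⟩ := Ideal.exists_le_maximal _ (gres_ne_top 𝒜 hne)
  have h1 : M ≤ gsharp 𝒜 m := le_trans (le_gsharp_gres 𝒜 hhom) (gsharp_mono 𝒜 hlem)
  have h2 : gsharp 𝒜 m = M := hmax _ (gsharp_homogeneous 𝒜 m) h1 (gsharp_ne_top 𝒜 hm.ne_top)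
  have h3 : gres 𝒜 M = m := by rw [← h2, gres_gsharp]
  rw [h3]; exact hm


theorem stmt_12 : IsGelfandGraded 𝒜 ↔
    ∀ P : Ideal ↥(𝒜 0), P.IsPrime → ∃! M : Ideal ↥(𝒜 0), M.IsMaximal ∧ P ≤ M := by
  constructor
  · intro H p hp
    obtain ⟨M, ⟨hMmax, hMle⟩, hMuniq⟩ := H (gsharp 𝒜 p) (gsharp_isGradedPrime 𝒜 hp)
    refine ⟨gres 𝒜 M, ⟨gres_isMaximal 𝒜 hMmax, ?_⟩, ?_⟩
    · intro a ha
      rw [mem_gres]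
      have : a ∈ gres 𝒜 (gsharp 𝒜 p) := by rw [gres_gsharp]; exact ha
      rw [mem_gres] at this
      exact hMle this
    · rintro m' ⟨hm'max, hm'le⟩
      have hmle : gsharp 𝒜 p ≤ gsharp 𝒜 m' := gsharp_mono 𝒜 hm'le
      have : gsharp 𝒜 m' = M :=
        hMuniq _ ⟨gsharp_isGradedMaximal 𝒜 hm'max, hmle⟩
      rw [← gres_gsharp 𝒜 m', this]
  · intro H P hP
    have hp := gres_isPrime 𝒜 hP
    obtain ⟨m, ⟨hmmax, hmle⟩, hmuniq⟩ := H _ hp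
    refine ⟨gsharp 𝒜 m, ⟨gsharp_isGradedMaximal 𝒜 hmmax,
      le_trans (le_gsharp_gres 𝒜 hP.1) (gsharp_mono 𝒜 hmle)⟩, ?_⟩
    rintro M' ⟨hM'max, hM'le⟩
    have hgresmono : gres 𝒜 P ≤ gres 𝒜 M' := by
      intro a ha
      rw [mem_gres] at ha ⊢
      exact hM'le ha
    have hm' : gres 𝒜 M' = m :=
      hmuniq _ ⟨gres_isMaximal 𝒜 hM'max, hgresmono⟩
    have h2 : M' ≤ gsharp 𝒜 m := by
      rw [← hm']
      exact le_gsharp_gres 𝒜 hM'max.1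
    exact (hM'max.2.2 _ (gsharp_homogeneous 𝒜 m) h2 (gsharp_ne_top 𝒜 hmmax.ne_top)).symm

end Statements
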